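/- arXiv:2403.16381 — 2 statements merged into one kernel-verified Lean document; each statement's English description precedes it below -/
import Mathlib

section
/- Any cluster matrix T = Σ_μ t_μ X_μ, built as a linear combination of excitation matrices whose occupied indices lie in {1,...,N}, satisfies T^{N+1} = 0. Consequently exp(T) = Σ_{k=0}^{N} T^k/k! is a finite (polynomial) sum. -/
open Matrix

theorem stmt_5 (n K N m : ℕ) (hNK : N < K)
    (an : Fin K → Matrix (Fin n) (Fin n) ℂ)
    -- canonical anticommutation relations
    (hAA : ∀ P Q, an P * an Q + an Q * an P = 0)
    (hCC : ∀ P Q, (an P)ᴴ * (an Q)ᴴ + (an Q)ᴴ * (an P)ᴴ = 0)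
    (hCA : ∀ P Q, (an P)ᴴ * an Q + an Q * (an P)ᴴ = if P = Q then 1 else 0)
    -- a family of excitation matrices X_μ, given by lists of indices
    (As Is : Fin m → List (Fin K)) (t : Fin m → ℂ)
    (hlen : ∀ μ, (As μ).length = (Is μ).length)
    (hne : ∀ μ, As μ ≠ []) (hk : ∀ μ, (As μ).length ≤ N)
    (hAnd : ∀ μ, (As μ).Nodup) (hInd : ∀ μ, (Is μ).Nodup)
    (hAvirt : ∀ μ, ∀ A ∈ As μ, N ≤ A.val)
    (hIocc : ∀ μ, ∀ I ∈ Is μ, I.val < N)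
    -- the cluster matrix T = Σ_μ t_μ X_μ
    (T : Matrix (Fin n) (Fin n) ℂ)
    (hT : T = ∑ μ : Fin m,
      t μ • (((As μ).map fun P => (an P)ᴴ).prod * ((Is μ).map an).prod)) :
    T ^ (N + 1) = 0 ∧
    NormedSpace.exp T = ∑ k ∈ Finset.range (N + 1), ((k.factorial : ℂ)⁻¹) • T ^ k := by
  -- anticommutation of annihilation ops, squared zero
  have hsq : ∀ P, an P * an P = 0 := by
    intro P
    have := hAA P P
    have h2 : (2 : ℂ) • (an P * an P) = 0 := by
      rw [two_smul]; exact this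
    have := smul_eq_zero.mp h2
    rcases this with h | h
    · exact absurd h (by norm_num)
    · exact h
  -- an I * (an P)ᴴ = - (an P)ᴴ * an I  when I ≠ P
  have hswap : ∀ I P : Fin K, I ≠ P → an I * (an P)ᴴ = - ((an P)ᴴ * an I) := by
    intro I P hIP
    have := hCA P I
    rw [if_neg (fun h => hIP h.symm)] at this
    rw [add_comm] at this
    exact eq_neg_of_add_eq_zero_left this
  -- pull a single creator through a list of occupied annihilators
  have hpull1 : ∀ (L : List (Fin K)), (∀ I ∈ L, I.val < N) → ∀ P : Fin K, N ≤ P.val →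
      (L.map an).prod * (an P)ᴴ = ((-1 : ℂ) ^ L.length) • ((an P)ᴴ * (L.map an).prod) := by
    intro L hL P hP
    induction L with
    | nil => simp
    | cons a L ih =>
      have ha : a ≠ P := by
        intro h; subst h
        exact absurd (hL a List.mem_cons_self) (by omega)
      simp only [List.map_cons, List.prod_cons, List.length_cons, mul_assoc]
      rw [ih (fun I hI => hL I (List.mem_cons_of_mem a hI)), mul_smul_comm,
        ← mul_assoc, hswap a P ha, pow_succ]
      simp [mul_assoc, mul_smul_comm, smul_smul, mul_comm]
  -- pull a list of creators through a list of occupied annihilators (up to sign)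
  have hpull : ∀ (Bs : List (Fin K)), (∀ P ∈ Bs, N ≤ P.val) →
      ∀ (L : List (Fin K)), (∀ I ∈ L, I.val < N) →
      ∃ s : ℂ, (L.map an).prod * ((Bs.map fun P => (an P)ᴴ).prod)
        = s • (((Bs.map fun P => (an P)ᴴ).prod) * (L.map an).prod) := by
    intro Bs hBs
    induction Bs with
    | nil => intro L hL; exact ⟨1, by simp⟩
    | cons b Bs ih =>
      intro L hL
      obtain ⟨s, hs⟩ := ih (fun P hP => hBs P (List.mem_cons_of_mem b hP)) L hL
      refine ⟨(-1 : ℂ) ^ L.length * s, ?_⟩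
      simp only [List.map_cons, List.prod_cons]
      rw [← mul_assoc, hpull1 L hL b (hBs b List.mem_cons_self),
        smul_mul_assoc, mul_assoc, hs, mul_smul_comm, smul_smul, mul_assoc]
  -- a long product of occupied annihilators vanishes
  have hzero : ∀ (L : List (Fin K)), (∀ I ∈ L, I.val < N) → N < L.length →
      (L.map an).prod = 0 := by
    -- first: if there's a duplicate, product is zero
    have hdup : ∀ (L : List (Fin K)), ¬ L.Nodup → (L.map an).prod = 0 := by
      intro L
      induction L with
      | nil => intro h; exact absurd List.nodup_nil h
      | cons a L ih =>
        intro h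
        simp only [List.nodup_cons, not_and_or] at h
        rcases h with h | h
        · push_neg at h
          -- a ∈ L : pull a second copy of `an a` leftwards
          have key : ∀ (M : List (Fin K)), a ∈ M →
              an a * (M.map an).prod = 0 := by
            intro M
            induction M with
            | nil => intro h; simp at h
            | cons b M ihM =>
              intro hm
              rcases List.mem_cons.mp hm with rfl | hm
              · simp only [List.map_cons, List.prod_cons, ← mul_assoc, hsq, zero_mul]
              · simp only [List.map_cons, List.prod_cons, ← mul_assoc]
                have hab : an a * an b = - (an b * an a) :=
                  eq_neg_of_add_eq_zero_left (hAA a b)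
                rw [hab, neg_mul, mul_assoc, ihM hm, mul_zero, neg_zero]
          simp only [List.map_cons, List.prod_cons]
          exact key L h
        · simp only [List.map_cons, List.prod_cons, ih h, mul_zero]
    intro L hL hlen
    apply hdup
    intro hnd
    -- map to Fin N injectively, contradiction with length
    have : L.length ≤ N := by
      have : (L.map (fun I : Fin K => I.val)).Nodup := by
        exact (List.nodup_map_iff (fun a b h => Fin.ext h)).mpr hnd
      have hsub : ∀ x ∈ L.map (fun I : Fin K => I.val), x ∈ Finset.range N := by
        intro x hx
        simp only [List.mem_map] at hx
        obtain ⟨I, hI, rfl⟩ := hx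
        exact Finset.mem_range.mpr (hL I hI)
      have hcard : (L.map (fun I : Fin K => I.val)).toFinset.card ≤ N := by
        calc _ ≤ (Finset.range N).card :=
              Finset.card_le_card (fun x hx => hsub x (List.mem_toFinset.mp hx))
          _ = N := Finset.card_range N
      rw [List.toFinset_card_of_nodup this] at hcard
      simpa using hcard
    omega
  -- The main inductive claim via a span argument
  -- S j : matrices of the form C * (L.map an).prod with L occupied, j ≤ L.length
  set Gen : ℕ → Set (Matrix (Fin n) (Fin n) ℂ) := fun j =>
    { M | ∃ (C : Matrix (Fin n) (Fin n) ℂ) (L : List (Fin K)),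
        M = C * (L.map an).prod ∧ (∀ I ∈ L, I.val < N) ∧ j ≤ L.length } with hGen
  have step : ∀ j (M : Matrix (Fin n) (Fin n) ℂ), M ∈ Submodule.span ℂ (Gen j) →
      M * T ∈ Submodule.span ℂ (Gen (j + 1)) := by
    intro j M hM
    have : ∀ x ∈ Gen j, x * T ∈ Submodule.span ℂ (Gen (j + 1)) := by
      rintro x ⟨C, L, rfl, hLocc, hLlen⟩
      rw [hT, Finset.mul_sum]
      apply Submodule.sum_mem
      intro μ _
      obtain ⟨s, hs⟩ := hpull (As μ) (hAvirt μ) L hLocc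
      have : C * (L.map an).prod *
          (t μ • (((As μ).map fun P => (an P)ᴴ).prod * ((Is μ).map an).prod))
          = (t μ * s) • ((C * ((As μ).map fun P => (an P)ᴴ).prod) *
              (((L ++ Is μ).map an).prod)) := by
        rw [List.map_append, List.prod_append, mul_smul_comm, mul_assoc C,
          ← mul_assoc ((L.map an).prod), hs]
        simp only [Matrix.smul_mul, Matrix.mul_smul, mul_smul_comm, smul_smul, mul_assoc]
      rw [this]
      refine Submodule.smul_mem _ _ (Submodule.subset_span ?_)
      refine ⟨C * ((As μ).map fun P => (an P)ᴴ).prod, L ++ Is μ, rfl, ?_, ?_⟩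
      · intro I hI
        rcases List.mem_append.mp hI with h | h
        · exact hLocc I h
        · exact hIocc μ I h
      · have h1 : 1 ≤ (Is μ).length := by
          have := hlen μ
          have := hne μ
          cases h : As μ with
          | nil => exact absurd h (hne μ)
          | cons a l => simp [h] at *; omega
        simp only [List.length_append]; omega
    -- extend to the span
    induction hM using Submodule.span_induction with
    | mem x hx => exact this x hx
    | zero => simp [Submodule.zero_mem]
    | add x y _ _ hx hy => rw [add_mul]; exact Submodule.add_mem _ hx hy
    | smul c x _ hx => rw [smul_mul_assoc]; exact Submodule.smul_mem _ c hx
  have hTj : ∀ j, T ^ (j + 1) ∈ Submodule.span ℂ (Gen (j + 1)) := by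
    intro j
    induction j with
    | zero =>
      rw [pow_one, hT]
      apply Submodule.sum_mem
      intro μ _
      refine Submodule.smul_mem _ _ (Submodule.subset_span ?_)
      refine ⟨((As μ).map fun P => (an P)ᴴ).prod, Is μ, rfl, hIocc μ, ?_⟩
      have := hlen μ
      cases h : As μ with
      | nil => exact absurd h (hne μ)
      | cons a l => simp [h] at *; omega
    | succ j ih =>
      rw [pow_succ]
      exact step (j + 1) _ ih
  have hTN : T ^ (N + 1) = 0 := by
    have h := hTj N
    have hz : Submodule.span ℂ (Gen (N + 1)) = ⊥ := by
      rw [Submodule.span_eq_bot]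
      rintro x ⟨C, L, rfl, hLocc, hLlen⟩
      rw [hzero L hLocc (by omega), mul_zero]
    rw [hz] at h
    simpa using h
  refine ⟨hTN, ?_⟩
  rw [NormedSpace.exp_eq_tsum ℂ]
  refine tsum_eq_sum ?_
  intro k hk'
  have hkN : N + 1 ≤ k := by simp only [Finset.mem_range, not_lt] at hk'; omega
  have : T ^ k = 0 := by
    calc T ^ k = T ^ (N + 1) * T ^ (k - (N + 1)) := by rw [← pow_add]; congr 1; omega
    _ = 0 := by rw [hTN, zero_mul]
  simp [this]
end

section
/- If |w⟩ ∈ ℂ^{2^K} satisfies ⟨φ₀|w⟩ = 1 (with |φ₀⟩ the reference determinant) and |w⟩ lies in the N-particle sector, then there exists a unique cluster amplitude vector t such that |w⟩ = e^{T(t)}|φ₀⟩, where T(t) = Σ_μ t_μ X_μ ranges over all excitation matrices of order k ≤ N. -/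
open Matrix

/-- The 2×2 annihilation matrix `a = [[0,1],[0,0]]`. -/
noncomputable def amat : Matrix (Fin 2) (Fin 2) ℂ := !![0, 1; 0, 0]

/-- The Pauli matrix `σ_z = [[1,0],[0,-1]]`. -/
noncomputable def sigmaZ : Matrix (Fin 2) (Fin 2) ℂ := !![1, 0; 0, -1]

/-- The fermionic annihilation matrix
`a_P = σ_z ⊗ ⋯ ⊗ σ_z ⊗ a ⊗ I ⊗ ⋯ ⊗ I` on `(ℂ²)^{⊗K}`, written entrywise. -/
noncomputable def ann (K : ℕ) (P : Fin K) :
    Matrix (Fin K → Fin 2) (Fin K → Fin 2) ℂ := fun s t =>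
  ∏ Q : Fin K,
    if Q < P then sigmaZ (s Q) (t Q)
    else if Q = P then amat (s Q) (t Q)
    else (1 : Matrix (Fin 2) (Fin 2) ℂ) (s Q) (t Q)

/-- The excitation matrix `X_μ = a_{A_k}† ⋯ a_{A_1}† a_{I_k} ⋯ a_{I_1}`. -/
noncomputable def exc (K : ℕ) (As Is : List (Fin K)) :
    Matrix (Fin K → Fin 2) (Fin K → Fin 2) ℂ :=
  (As.map fun P => (ann K P)ᴴ).prod * (Is.map (ann K)).prod


/-- The reference determinant `|φ₀⟩ = a_N† ⋯ a_1† |0,…,0⟩`: the basis vector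
whose first `N` occupation numbers are `1` and the rest are `0`. -/
noncomputable def refState (K N : ℕ) : (Fin K → Fin 2) → ℂ := fun s =>
  if (fun i : Fin K => if i.val < N then (1 : Fin 2) else 0) = s then 1 else 0


/-- Multi-indices μ of excitation matrices of order `1 ≤ k ≤ N`: a set of
virtual indices and a set of occupied indices of equal cardinality `k`. -/
def ExIdx (K N : ℕ) : Type :=
  {p : Finset (Fin K) × Finset (Fin K) //
    (∀ A ∈ p.1, N ≤ A.val) ∧ (∀ I ∈ p.2, I.val < N) ∧
      p.1.card = p.2.card ∧ 1 ≤ p.1.card ∧ p.1.card ≤ N}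

noncomputable instance (K N : ℕ) : Fintype (ExIdx K N) := by
  unfold ExIdx; infer_instance

/-- The excitation matrix `X_μ` associated with a multi-index μ. -/
noncomputable def excIdx {K N : ℕ} (μ : ExIdx K N) :
    Matrix (Fin K → Fin 2) (Fin K → Fin 2) ℂ :=
  exc K (μ.1.1.sort (· ≤ ·)) (μ.1.2.sort (· ≤ ·))



namespace CC

lemma fin2_cases (x : Fin 2) : x = 0 ∨ x = 1 := by omega

lemma amat_apply (i j : Fin 2) : amat i j = if i = 0 ∧ j = 1 then 1 else 0 := by
  fin_cases i <;> fin_cases j <;> simp [amat]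

lemma sigmaZ_apply (i j : Fin 2) :
    sigmaZ i j = if i = j then (if i = 1 then -1 else 1) else 0 := by
  fin_cases i <;> fin_cases j <;> simp [sigmaZ]

variable {K : ℕ}

/-- the sign `(-1)^{#{Q < P occupied in u}}`. -/
noncomputable def esgn (u : Fin K → Fin 2) (P : Fin K) : ℂ :=
  ∏ Q ∈ Finset.univ.filter (fun Q => Q < P), (if u Q = 1 then (-1 : ℂ) else 1)

lemma esgn_cases (u : Fin K → Fin 2) (P : Fin K) : esgn u P = 1 ∨ esgn u P = -1 := by
  classical
  unfold esgn
  induction (Finset.univ.filter (fun Q : Fin K => Q < P)) using Finset.induction with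
  | empty => simp
  | insert a s h ih =>
      rw [Finset.prod_insert h]
      rcases ih with h1 | h1 <;> rw [h1] <;> split <;> simp

lemma esgn_ne_zero (u : Fin K → Fin 2) (P : Fin K) : esgn u P ≠ 0 := by
  rcases esgn_cases u P with h | h <;> rw [h] <;> norm_num

/-- full characterization of the entries of `ann`. -/
lemma ann_apply (t u : Fin K → Fin 2) (P : Fin K) :
    ann K P t u =
      if u P = 1 ∧ t = Function.update u P 0 then esgn u P else 0 := by
  classical
  by_cases h : u P = 1 ∧ t = Function.update u P 0
  · rw [if_pos h]
    obtain ⟨h1, h2⟩ := h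
    unfold ann
    have : ∀ Q : Fin K,
        (if Q < P then sigmaZ (t Q) (u Q)
         else if Q = P then amat (t Q) (u Q)
         else (1 : Matrix (Fin 2) (Fin 2) ℂ) (t Q) (u Q)) =
        (if Q ∈ Finset.univ.filter (fun Q : Fin K => Q < P) then
          (if u Q = 1 then (-1 : ℂ) else 1) else 1) := by
      intro Q
      by_cases hQP : Q < P
      · have hne : Q ≠ P := ne_of_lt hQP
        rw [if_pos hQP, h2, Function.update_of_ne hne, sigmaZ_apply]
        simp [hQP]
      · rw [if_neg hQP]
        by_cases hQ : Q = P
        · subst hQ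
          rw [if_pos rfl, h2, Function.update_self, amat_apply]
          simp [h1, hQP]
        · rw [if_neg hQ, h2, Function.update_of_ne hQ, Matrix.one_apply_eq]
          simp [hQP]
    rw [Finset.prod_congr rfl (fun Q _ => this Q), Finset.prod_ite_mem,
      Finset.univ_inter]
    rfl
  · rw [if_neg h]
    rw [not_and_or] at h
    rcases h with h | h
    · have h0 : u P = 0 := by rcases fin2_cases (u P) with h' | h' <;> simp_all
      apply Finset.prod_eq_zero (Finset.mem_univ P)
      simp [h0, amat_apply]
    · have : ∃ Q : Fin K, t Q ≠ Function.update u P 0 Q := by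
        by_contra hc
        push_neg at hc
        exact h (funext hc)
      obtain ⟨Q, hQ⟩ := this
      apply Finset.prod_eq_zero (Finset.mem_univ Q)
      by_cases hQP : Q = P
      · subst hQP
        rw [Function.update_self] at hQ
        have ht1 : t Q = 1 := by rcases fin2_cases (t Q) with h' | h' <;> simp_all
        have : ¬ Q < Q := lt_irrefl Q
        rw [if_neg this, if_pos rfl, amat_apply]
        simp [ht1]
      · rw [Function.update_of_ne hQP] at hQ
        by_cases hlt : Q < P
        · rw [if_pos hlt, sigmaZ_apply, if_neg hQ]
        · rw [if_neg hlt, if_neg hQP, Matrix.one_apply_ne hQ]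

end CC

namespace CC2
open CC
variable {K : ℕ}

/-- occupation configuration of a finite set -/
def cfg (S : Finset (Fin K)) : Fin K → Fin 2 := fun i => if i ∈ S then 1 else 0

/-- basis (delta) vector of a configuration -/
noncomputable def dvec (S : Finset (Fin K)) : (Fin K → Fin 2) → ℂ :=
  Pi.single (cfg S) 1

lemma dvec_apply (S : Finset (Fin K)) (t : Fin K → Fin 2) :
    dvec S t = if t = cfg S then 1 else 0 := by
  rw [dvec, Pi.single_apply]

lemma cfg_mem_iff {S : Finset (Fin K)} {i : Fin K} : cfg S i = 1 ↔ i ∈ S := by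
  unfold cfg; split <;> simp_all

lemma cfg_injective : Function.Injective (cfg (K := K)) := by
  intro S S' h
  ext i
  rw [← cfg_mem_iff, ← cfg_mem_iff, h]

lemma oset_cfg (s : Fin K → Fin 2) :
    cfg (Finset.univ.filter (fun i => s i = 1)) = s := by
  funext i
  unfold cfg
  rcases fin2_cases (s i) with h | h <;> simp [h]

lemma cfg_erase (S : Finset (Fin K)) (P : Fin K) :
    cfg (S.erase P) = Function.update (cfg S) P 0 := by
  funext i
  by_cases h : i = P
  · subst h; simp [cfg]
  · simp [cfg, Function.update_of_ne h, Finset.mem_erase, h]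

lemma cfg_insert (S : Finset (Fin K)) (P : Fin K) :
    cfg (insert P S) = Function.update (cfg S) P 1 := by
  funext i
  by_cases h : i = P
  · subst h; simp [cfg]
  · simp [cfg, Function.update_of_ne h, Finset.mem_insert, h]

lemma ann_mulVec (P : Fin K) (S : Finset (Fin K)) :
    (ann K P).mulVec (dvec S) =
      if P ∈ S then esgn (cfg S) P • dvec (S.erase P) else 0 := by
  classical
  rw [dvec, Matrix.mulVec_single]
  funext t
  rw [MulOpposite.op_one, one_smul, Matrix.col, Matrix.transpose_apply, ann_apply]
  by_cases hP : P ∈ S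
  · rw [if_pos hP]
    have h1 : cfg S P = 1 := cfg_mem_iff.2 hP
    rw [Pi.smul_apply, dvec_apply, cfg_erase]
    by_cases ht : t = Function.update (cfg S) P 0
    · rw [if_pos ⟨h1, ht⟩, if_pos ht]; simp
    · rw [if_neg (fun h => ht h.2), if_neg ht]; simp
  · rw [if_neg hP]
    have h0 : cfg S P = 0 := by
      rcases fin2_cases (cfg S P) with h | h
      · exact h
      · exact absurd (cfg_mem_iff.1 h) hP
    rw [if_neg (by simp [h0])]
    rfl

lemma cre_mulVec (P : Fin K) (S : Finset (Fin K)) :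
    ((ann K P)ᴴ).mulVec (dvec S) =
      if P ∉ S then esgn (cfg S) P • dvec (insert P S) else 0 := by
  classical
  rw [dvec, Matrix.mulVec_single]
  funext t
  rw [MulOpposite.op_one, one_smul, Matrix.col, Matrix.transpose_apply, Matrix.conjTranspose_apply, ann_apply]
  by_cases hP : P ∈ S
  · have h1 : cfg S P = 1 := cfg_mem_iff.2 hP
    have : ¬ (t P = 1 ∧ cfg S = Function.update t P 0) := by
      rintro ⟨h1', h2⟩
      have := congrFun h2 P
      rw [Function.update_self] at this
      rw [h1] at this
      exact absurd this (by decide)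
    rw [if_neg this, star_zero, if_neg (not_not_intro hP)]
    rfl
  · rw [if_pos hP]
    have h0 : cfg S P = 0 := by
      rcases fin2_cases (cfg S P) with h | h
      · exact h
      · exact absurd (cfg_mem_iff.1 h) hP
    rw [Pi.smul_apply, dvec_apply, cfg_insert]
    by_cases ht : t = Function.update (cfg S) P 1
    · have ht1 : t P = 1 := by rw [ht, Function.update_self]
      have hback : cfg S = Function.update t P 0 := by
        funext i
        by_cases hi : i = P
        · subst hi; rw [Function.update_self, h0]
        · rw [Function.update_of_ne hi, ht, Function.update_of_ne hi]
      rw [if_pos ⟨ht1, hback⟩, if_pos ht]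
      have hesgn : esgn t P = esgn (cfg S) P := by
        unfold esgn
        apply Finset.prod_congr rfl
        intro Q hQ
        rw [Finset.mem_filter] at hQ
        rw [ht, Function.update_of_ne (ne_of_lt hQ.2)]
      rw [hesgn]
      rcases esgn_cases (cfg S) P with h | h <;> rw [h] <;> simp
    · rw [if_neg ht]
      have : ¬ (t P = 1 ∧ cfg S = Function.update t P 0) := by
        rintro ⟨h1', h2⟩
        apply ht
        funext i
        by_cases hi : i = P
        · subst hi; rw [Function.update_self, h1']
        · rw [Function.update_of_ne hi]
          have := congrFun h2 i
          rw [Function.update_of_ne hi] at this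
          rw [← this]
      rw [if_neg this, star_zero]
      simp

end CC2

namespace CC3
open CC CC2
variable {K : ℕ}

lemma annList_mulVec : ∀ (L : List (Fin K)) (S : Finset (Fin K)), L.Nodup →
    (∀ I ∈ L, I ∈ S) →
    ∃ ε : ℂ, (ε = 1 ∨ ε = -1) ∧
      ((L.map (ann K)).prod).mulVec (dvec S) = ε • dvec (S \ L.toFinset)
  | [], S, _, _ => ⟨1, Or.inl rfl, by simp [Matrix.one_mulVec]⟩
  | a :: L, S, hnd, hmem => by
      classical
      obtain ⟨ε, hε, hIH⟩ := annList_mulVec L S (List.nodup_cons.1 hnd).2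
        (fun I hI => hmem I (List.mem_cons_of_mem a hI))
      have haS : a ∈ S := hmem a List.mem_cons_self
      have haL : a ∉ L.toFinset := by
        simp only [List.mem_toFinset]
        exact (List.nodup_cons.1 hnd).1
      have hain : a ∈ S \ L.toFinset := Finset.mem_sdiff.2 ⟨haS, haL⟩
      refine ⟨ε * esgn (cfg (S \ L.toFinset)) a, ?_, ?_⟩
      · rcases hε with h | h <;> rcases esgn_cases (cfg (S \ L.toFinset)) a with h' | h' <;>
          rw [h, h'] <;> norm_num
      · rw [List.map_cons, List.prod_cons, ← Matrix.mulVec_mulVec, hIH,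
          Matrix.mulVec_smul, ann_mulVec, if_pos hain]
        have : (S \ L.toFinset).erase a = S \ (a :: L).toFinset := by
          ext i
          simp only [Finset.mem_erase, Finset.mem_sdiff, List.toFinset_cons,
            Finset.mem_insert, List.mem_toFinset]
          tauto
        rw [smul_smul, this]

lemma annList_mulVec_zero : ∀ (L : List (Fin K)) (S : Finset (Fin K)), L.Nodup →
    (∃ I ∈ L, I ∉ S) → ((L.map (ann K)).prod).mulVec (dvec S) = 0
  | [], S, _, h => by simp at h
  | a :: L, S, hnd, h => by
      classical
      rw [List.map_cons, List.prod_cons, ← Matrix.mulVec_mulVec]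
      by_cases hex : ∃ I ∈ L, I ∉ S
      · rw [annList_mulVec_zero L S (List.nodup_cons.1 hnd).2 hex, Matrix.mulVec_zero]
      · push_neg at hex
        obtain ⟨ε, _, hIH⟩ := annList_mulVec L S (List.nodup_cons.1 hnd).2 hex
        obtain ⟨I, hI, hIS⟩ := h
        have haS : a ∉ S := by
          rcases List.mem_cons.1 hI with h' | h'
          · rwa [← h']
          · exact absurd (hex I h') hIS
        rw [hIH, Matrix.mulVec_smul, ann_mulVec,
          if_neg (fun hc => haS (Finset.mem_sdiff.1 hc).1), smul_zero]

lemma creList_mulVec : ∀ (L : List (Fin K)) (S : Finset (Fin K)), L.Nodup →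
    (∀ A ∈ L, A ∉ S) →
    ∃ ε : ℂ, (ε = 1 ∨ ε = -1) ∧
      ((L.map fun P => (ann K P)ᴴ).prod).mulVec (dvec S) = ε • dvec (S ∪ L.toFinset)
  | [], S, _, _ => ⟨1, Or.inl rfl, by simp [Matrix.one_mulVec]⟩
  | a :: L, S, hnd, hmem => by
      classical
      obtain ⟨ε, hε, hIH⟩ := creList_mulVec L S (List.nodup_cons.1 hnd).2
        (fun I hI => hmem I (List.mem_cons_of_mem a hI))
      have haS : a ∉ S := hmem a List.mem_cons_self
      have haL : a ∉ L.toFinset := by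
        simp only [List.mem_toFinset]
        exact (List.nodup_cons.1 hnd).1
      have hain : a ∉ S ∪ L.toFinset := by
        simp only [Finset.mem_union]
        tauto
      refine ⟨ε * esgn (cfg (S ∪ L.toFinset)) a, ?_, ?_⟩
      · rcases hε with h | h <;> rcases esgn_cases (cfg (S ∪ L.toFinset)) a with h' | h' <;>
          rw [h, h'] <;> norm_num
      · rw [List.map_cons, List.prod_cons, ← Matrix.mulVec_mulVec, hIH,
          Matrix.mulVec_smul, cre_mulVec, if_pos hain]
        have : insert a (S ∪ L.toFinset) = S ∪ (a :: L).toFinset := by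
          ext i
          simp only [Finset.mem_insert, Finset.mem_union, List.toFinset_cons,
            List.mem_toFinset]
          tauto
        rw [smul_smul, this]

lemma creList_mulVec_zero : ∀ (L : List (Fin K)) (S : Finset (Fin K)), L.Nodup →
    (∃ A ∈ L, A ∈ S) → ((L.map fun P => (ann K P)ᴴ).prod).mulVec (dvec S) = 0
  | [], S, _, h => by simp at h
  | a :: L, S, hnd, h => by
      classical
      rw [List.map_cons, List.prod_cons, ← Matrix.mulVec_mulVec]
      by_cases hex : ∃ A ∈ L, A ∈ S
      · rw [creList_mulVec_zero L S (List.nodup_cons.1 hnd).2 hex, Matrix.mulVec_zero]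
      · push_neg at hex
        obtain ⟨ε, _, hIH⟩ := creList_mulVec L S (List.nodup_cons.1 hnd).2 hex
        obtain ⟨A, hA, hAS⟩ := h
        have haS : a ∈ S := by
          rcases List.mem_cons.1 hA with h' | h'
          · rwa [← h']
          · exact absurd hAS (hex A h')
        have : a ∈ S ∪ L.toFinset := Finset.mem_union_left _ haS
        rw [hIH, Matrix.mulVec_smul, cre_mulVec, if_neg (not_not_intro this), smul_zero]

/-- action of a normally ordered excitation operator on a basis state -/
lemma exc_mulVec (As Is S : Finset (Fin K)) (hIs : Is ⊆ S) (hAs : Disjoint As S) :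
    ∃ ε : ℂ, (ε = 1 ∨ ε = -1) ∧
      (exc K (As.sort (· ≤ ·)) (Is.sort (· ≤ ·))).mulVec (dvec S) =
        ε • dvec ((S \ Is) ∪ As) := by
  classical
  obtain ⟨ε₁, hε₁, h1⟩ := annList_mulVec (Is.sort (· ≤ ·)) S (Finset.sort_nodup _ _)
    (fun I hI => hIs ((Finset.mem_sort _).1 hI))
  obtain ⟨ε₂, hε₂, h2⟩ := creList_mulVec (As.sort (· ≤ ·)) (S \ Is)
    (Finset.sort_nodup _ _)
    (fun A hA hc => (Finset.disjoint_left.1 hAs) ((Finset.mem_sort _).1 hA)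
      (Finset.mem_sdiff.1 hc).1)
  refine ⟨ε₂ * ε₁, ?_, ?_⟩
  · rcases hε₁ with h | h <;> rcases hε₂ with h' | h' <;> rw [h, h'] <;> norm_num
  · rw [exc, ← Matrix.mulVec_mulVec, Finset.sort_toFinset] at *
    rw [h1, Matrix.mulVec_smul, h2, smul_smul, mul_comm ε₁ ε₂]

lemma exc_mulVec_zero (As Is S : Finset (Fin K)) (hdisj : Disjoint As Is)
    (h : ¬ (Is ⊆ S ∧ Disjoint As S)) :
    (exc K (As.sort (· ≤ ·)) (Is.sort (· ≤ ·))).mulVec (dvec S) = 0 := by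
  classical
  rw [exc, ← Matrix.mulVec_mulVec]
  by_cases hIs : Is ⊆ S
  · have hAs : ¬ Disjoint As S := fun hc => h ⟨hIs, hc⟩
    obtain ⟨ε₁, _, h1⟩ := annList_mulVec (Is.sort (· ≤ ·)) S (Finset.sort_nodup _ _)
      (fun I hI => hIs ((Finset.mem_sort _).1 hI))
    obtain ⟨a, haA, haS⟩ := Finset.not_disjoint_iff.1 hAs
    rw [h1, Matrix.mulVec_smul, Finset.sort_toFinset]
    rw [creList_mulVec_zero (As.sort (· ≤ ·)) (S \ Is) (Finset.sort_nodup _ _)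
      ⟨a, (Finset.mem_sort _).2 haA,
        Finset.mem_sdiff.2 ⟨haS, fun hc => (Finset.disjoint_left.1 hdisj) haA hc⟩⟩,
      smul_zero]
  · have : ∃ I ∈ Is.sort (· ≤ ·), I ∉ S := by
      obtain ⟨I, hI, hIS⟩ := Finset.not_subset.1 hIs
      exact ⟨I, (Finset.mem_sort _).2 hI, hIS⟩
    rw [annList_mulVec_zero (Is.sort (· ≤ ·)) S (Finset.sort_nodup _ _) this,
      Matrix.mulVec_zero]

end CC3

namespace CC4
open CC CC2 CC3

/-- reference occupation set -/
def S0 (K N : ℕ) : Finset (Fin K) := Finset.univ.filter (fun i : Fin K => (i : ℕ) < N)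

/-- virtual rank of an occupation set -/
def virt (N : ℕ) {K : ℕ} (S : Finset (Fin K)) : ℕ :=
  (S.filter (fun i : Fin K => N ≤ (i : ℕ))).card

variable {K N : ℕ}

lemma mem_S0 {i : Fin K} : i ∈ S0 K N ↔ (i : ℕ) < N := by simp [S0]

lemma card_S0 (hNK : N ≤ K) : (S0 K N).card = N := by
  classical
  have : S0 K N = Finset.map (Fin.castLEEmb hNK) Finset.univ := by
    ext i
    simp only [mem_S0, Finset.mem_map, Finset.mem_univ, true_and]
    constructor
    · intro h
      exact ⟨⟨i, h⟩, by simp [Fin.castLEEmb, Fin.castLE, Fin.ext_iff]⟩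
    · rintro ⟨j, rfl⟩
      simp [Fin.castLEEmb, Fin.castLE]
  rw [this, Finset.card_map, Finset.card_univ, Fintype.card_fin]

/-- the excited determinant's occupation set -/
def Smu (μ : ExIdx K N) : Finset (Fin K) := ((S0 K N) \ μ.1.2) ∪ μ.1.1

/-- rank of an excitation -/
def rk (μ : ExIdx K N) : ℕ := μ.1.1.card

lemma disjoint_As_S0 (μ : ExIdx K N) : Disjoint μ.1.1 (S0 K N) :=
  Finset.disjoint_left.2 (fun a ha hc => by
    have := μ.2.1 a ha
    have := mem_S0.1 hc
    omega)

lemma Is_subset_S0 (μ : ExIdx K N) : μ.1.2 ⊆ S0 K N :=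
  fun i hi => mem_S0.2 (μ.2.2.1 i hi)

lemma disjoint_As_Is (μ : ExIdx K N) : Disjoint μ.1.1 μ.1.2 :=
  Finset.disjoint_left.2 (fun a ha hc => by
    have := μ.2.1 a ha
    have := μ.2.2.1 a hc
    omega)

lemma virt_S0 : virt N (S0 K N) = 0 := by
  rw [virt, Finset.card_eq_zero, Finset.filter_eq_empty_iff]
  intro i hi
  have := mem_S0.1 hi
  omega

lemma virt_Smu (μ : ExIdx K N) : virt N (Smu μ) = rk μ := by
  classical
  have h : (Smu μ).filter (fun i : Fin K => N ≤ (i : ℕ)) = μ.1.1 := by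
    ext i
    simp only [Smu, Finset.mem_filter, Finset.mem_union, Finset.mem_sdiff, mem_S0]
    constructor
    · rintro ⟨⟨h1a, h1b⟩ | h1, h2⟩
      · omega
      · exact h1
    · intro h
      exact ⟨Or.inr h, μ.2.1 i h⟩
  rw [virt, h, rk]

lemma card_Smu (hNK : N ≤ K) (μ : ExIdx K N) : (Smu μ).card = N := by
  classical
  rw [Smu, Finset.card_union_of_disjoint
    (Finset.disjoint_of_subset_right Finset.sdiff_subset (disjoint_As_S0 μ)).symm,
    Finset.card_sdiff_of_subset (Is_subset_S0 μ), card_S0 hNK, μ.2.2.2.1]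
  have h2 : μ.1.2.card ≤ N := by rw [← μ.2.2.2.1]; exact μ.2.2.2.2.2
  omega

lemma Smu_ne_S0 (μ : ExIdx K N) : Smu μ ≠ S0 K N := by
  intro h
  have h1 := virt_Smu μ
  rw [h, virt_S0] at h1
  have := μ.2.2.2.2.1
  rw [rk] at h1
  omega

lemma virt_le_card (S : Finset (Fin K)) : virt N S ≤ S.card :=
  Finset.card_le_card (Finset.filter_subset _ _)

/-- the excitation index attached to an N-particle occupation set -/
noncomputable def toIdx (hNK : N ≤ K) (S : Finset (Fin K)) (h1 : S.card = N)
    (h2 : S ≠ S0 K N) : ExIdx K N := by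
  classical
  refine ⟨(S.filter (fun i : Fin K => N ≤ (i : ℕ)), (S0 K N) \ S), ?_, ?_, ?_, ?_, ?_⟩
  · intro A hA
    exact (Finset.mem_filter.1 hA).2
  · intro I hI
    exact mem_S0.1 (Finset.mem_sdiff.1 hI).1
  · have hAs2 : S.filter (fun i : Fin K => N ≤ (i : ℕ)) = S \ S0 K N := by
      ext i
      simp only [Finset.mem_filter, Finset.mem_sdiff, mem_S0]
      exact ⟨fun ⟨ha, hb⟩ => ⟨ha, by omega⟩, fun ⟨ha, hb⟩ => ⟨ha, by omega⟩⟩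
    have e1 : (S \ S0 K N).card + (S ∩ S0 K N).card = S.card :=
      Finset.card_sdiff_add_card_inter S (S0 K N)
    have e2 : (S0 K N \ S).card + (S0 K N ∩ S).card = (S0 K N).card :=
      Finset.card_sdiff_add_card_inter (S0 K N) S
    have e3 : S ∩ S0 K N = S0 K N ∩ S := Finset.inter_comm S (S0 K N)
    have e4 := card_S0 (K := K) hNK
    show (S.filter (fun i : Fin K => N ≤ (i : ℕ))).card = (S0 K N \ S).card
    rw [hAs2]
    rw [e3] at e1
    omega
  · rw [Nat.one_le_iff_ne_zero]
    intro hc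
    rw [Finset.card_eq_zero, Finset.filter_eq_empty_iff] at hc
    apply h2
    apply Finset.eq_of_subset_of_card_le
    · intro i hi
      rw [mem_S0]
      have := hc hi
      omega
    · rw [card_S0 hNK, h1]
  · calc (S.filter (fun i : Fin K => N ≤ (i : ℕ))).card
        = virt N S := rfl
      _ ≤ S.card := virt_le_card S
      _ = N := h1

lemma Smu_toIdx (hNK : N ≤ K) (S : Finset (Fin K)) (h1 : S.card = N)
    (h2 : S ≠ S0 K N) : Smu (toIdx hNK S h1 h2) = S := by
  classical
  ext i
  simp only [Smu, toIdx, Finset.mem_union, Finset.mem_sdiff, Finset.mem_filter, mem_S0]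
  constructor
  · rintro (⟨h3, h4⟩ | ⟨h3, _⟩)
    · by_contra hc
      exact h4 ⟨h3, hc⟩
    · exact h3
  · intro h
    by_cases hiN : (i : ℕ) < N
    · left
      exact ⟨hiN, fun hc => hc.2 h⟩
    · right
      exact ⟨h, by omega⟩

lemma toIdx_Smu (hNK : N ≤ K) (μ : ExIdx K N) (h1 : (Smu μ).card = N)
    (h2 : Smu μ ≠ S0 K N) : toIdx hNK (Smu μ) h1 h2 = μ := by
  classical
  have hAs : (Smu μ).filter (fun i : Fin K => N ≤ (i : ℕ)) = μ.1.1 := by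
    ext i
    simp only [Smu, Finset.mem_filter, Finset.mem_union, Finset.mem_sdiff, mem_S0]
    constructor
    · rintro ⟨⟨h3a, h3b⟩ | h3, h4⟩
      · omega
      · exact h3
    · intro h
      exact ⟨Or.inr h, μ.2.1 i h⟩
  have hIs : (S0 K N) \ Smu μ = μ.1.2 := by
    ext i
    simp only [Smu, Finset.mem_sdiff, Finset.mem_union, mem_S0]
    constructor
    · rintro ⟨h3, h4⟩
      by_contra hc
      exact h4 (Or.inl ⟨h3, hc⟩)
    · intro h
      have hiN := μ.2.2.1 i h
      have hA : i ∉ μ.1.1 := fun hc => by have := μ.2.1 i hc; omega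
      exact ⟨hiN, fun hc => hc.elim (fun h5 => h5.2 h) hA⟩
  apply Subtype.ext
  rw [toIdx]
  exact Prod.ext hAs hIs

/-- the sign of the excited determinant `X_μ |φ₀⟩ = eps μ • |Φ_μ⟩` -/
noncomputable def eps (μ : ExIdx K N) : ℂ :=
  ((excIdx μ).mulVec (dvec (S0 K N))) (cfg (Smu μ))

lemma excIdx_ref (μ : ExIdx K N) :
    (excIdx μ).mulVec (dvec (S0 K N)) = eps μ • dvec (Smu μ) ∧
      (eps μ = 1 ∨ eps μ = -1) := by
  classical
  obtain ⟨ε, hε, h⟩ := exc_mulVec μ.1.1 μ.1.2 (S0 K N) (Is_subset_S0 μ)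
    (disjoint_As_S0 μ)
  have hSmu : Smu μ = (S0 K N) \ μ.1.2 ∪ μ.1.1 := rfl
  have hee : eps μ = ε := by
    rw [eps, excIdx, h, Pi.smul_apply, dvec_apply,
      if_pos (by rw [hSmu]), smul_eq_mul, mul_one]
  constructor
  · rw [excIdx, hee, h, hSmu]
  · rw [hee]; exact hε

lemma eps_ne_zero (μ : ExIdx K N) : eps μ ≠ 0 := by
  rcases (excIdx_ref μ).2 with h | h <;> rw [h] <;> norm_num

/-- action of `X_μ` on a general basis state, nonzero case -/
lemma excIdx_dvec (μ : ExIdx K N) (S : Finset (Fin K))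
    (h : μ.1.2 ⊆ S ∧ Disjoint μ.1.1 S) :
    ∃ ε : ℂ, (ε = 1 ∨ ε = -1) ∧
      (excIdx μ).mulVec (dvec S) = ε • dvec ((S \ μ.1.2) ∪ μ.1.1) :=
  exc_mulVec μ.1.1 μ.1.2 S h.1 h.2

/-- action of `X_μ` on a general basis state, zero case -/
lemma excIdx_dvec_zero (μ : ExIdx K N) (S : Finset (Fin K))
    (h : ¬ (μ.1.2 ⊆ S ∧ Disjoint μ.1.1 S)) :
    (excIdx μ).mulVec (dvec S) = 0 :=
  exc_mulVec_zero μ.1.1 μ.1.2 S (disjoint_As_Is μ) h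

end CC4

namespace CC5
open CC CC2 CC3 CC4

variable {K N : ℕ}

/-- occupation set of a configuration -/
def oset (s : Fin K → Fin 2) : Finset (Fin K) :=
  Finset.univ.filter (fun i => s i = 1)

lemma cfg_oset (s : Fin K → Fin 2) : cfg (oset s) = s := oset_cfg s

lemma oset_cfg' (S : Finset (Fin K)) : oset (cfg S) = S :=
  cfg_injective (by rw [cfg_oset])

/-- cluster operator -/
noncomputable def Tcl (t : ExIdx K N → ℂ) :
    Matrix (Fin K → Fin 2) (Fin K → Fin 2) ℂ :=
  ∑ μ : ExIdx K N, t μ • excIdx μ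

lemma mulVec_apply' (M : Matrix (Fin K → Fin 2) (Fin K → Fin 2) ℂ)
    (v : (Fin K → Fin 2) → ℂ) (s : Fin K → Fin 2) :
    (M *ᵥ v) s = ∑ u, M s u * v u := rfl

lemma sum_mulVec {ι : Type*} (s : Finset ι)
    (f : ι → Matrix (Fin K → Fin 2) (Fin K → Fin 2) ℂ)
    (v : (Fin K → Fin 2) → ℂ) :
    (∑ i ∈ s, f i) *ᵥ v = ∑ i ∈ s, (f i) *ᵥ v := by
  funext x
  conv_rhs => rw [Finset.sum_apply]
  rw [mulVec_apply']
  calc ∑ u, (∑ i ∈ s, f i) x u * v u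
      = ∑ u, ∑ i ∈ s, f i x u * v u := by
        apply Finset.sum_congr rfl
        intro u _
        rw [Matrix.sum_apply, Finset.sum_mul]
    _ = ∑ i ∈ s, ∑ u, f i x u * v u := Finset.sum_comm
    _ = ∑ i ∈ s, (f i *ᵥ v) x := by
        apply Finset.sum_congr rfl
        intro i _
        rw [mulVec_apply']

lemma Top_apply (t : ExIdx K N → ℂ) (s u : Fin K → Fin 2) :
    Tcl t s u = ∑ μ : ExIdx K N, t μ * excIdx μ s u := by
  rw [Tcl, Matrix.sum_apply]
  apply Finset.sum_congr rfl
  intro μ _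
  rw [Matrix.smul_apply, smul_eq_mul]

/-- entries of `X_μ` relate particle number and rank -/
lemma excIdx_entry {μ : ExIdx K N} {s u : Fin K → Fin 2}
    (h : excIdx μ s u ≠ 0) :
    (oset s).card = (oset u).card ∧
      virt N (oset s) = virt N (oset u) + rk μ := by
  classical
  have hcol : excIdx μ s u = ((excIdx μ).mulVec (dvec (oset u))) s := by
    rw [dvec, cfg_oset, Matrix.mulVec_single]
    simp
  by_cases hcond : μ.1.2 ⊆ oset u ∧ Disjoint μ.1.1 (oset u)
  · obtain ⟨ε, hε, heq⟩ := excIdx_dvec μ (oset u) hcond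
    rw [hcol, heq] at h
    have hs : s = cfg ((oset u \ μ.1.2) ∪ μ.1.1) := by
      by_contra hc
      rw [Pi.smul_apply, dvec_apply, if_neg hc, smul_zero] at h
      exact h rfl
    have hos : oset s = (oset u \ μ.1.2) ∪ μ.1.1 := by
      rw [hs, oset_cfg']
    have hdisj1 : Disjoint μ.1.1 (oset u \ μ.1.2) :=
      Finset.disjoint_of_subset_right Finset.sdiff_subset hcond.2
    have hIsle : μ.1.2.card ≤ (oset u).card := Finset.card_le_card hcond.1
    constructor
    · rw [hos, Finset.card_union_of_disjoint hdisj1.symm,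
        Finset.card_sdiff_of_subset hcond.1, μ.2.2.2.1]
      omega
    · have hfil : (oset s).filter (fun i : Fin K => N ≤ (i : ℕ)) =
          ((oset u).filter (fun i : Fin K => N ≤ (i : ℕ))) ∪ μ.1.1 := by
        ext i
        simp only [hos, Finset.mem_filter, Finset.mem_union, Finset.mem_sdiff]
        constructor
        · rintro ⟨h1 | h1, h2⟩
          · exact Or.inl ⟨h1.1, h2⟩
          · exact Or.inr h1
        · rintro (⟨h1, h2⟩ | h1)
          · have : i ∉ μ.1.2 := fun hc => by have := μ.2.2.1 i hc; omega
            exact ⟨Or.inl ⟨h1, this⟩, h2⟩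
          · exact ⟨Or.inr h1, μ.2.1 i h1⟩
      have hdisj2 : Disjoint μ.1.1
          ((oset u).filter (fun i : Fin K => N ≤ (i : ℕ))) :=
        Finset.disjoint_of_subset_right (Finset.filter_subset _ _) hcond.2
      rw [virt, virt, hfil, Finset.card_union_of_disjoint hdisj2.symm, rk]
  · rw [hcol, excIdx_dvec_zero μ (oset u) hcond] at h
    exact (h rfl).elim

/-- virtual-rank support growth -/
lemma suppV_T (t : ExIdx K N → ℂ) (m : ℕ) (v : (Fin K → Fin 2) → ℂ)
    (hv : ∀ s, v s ≠ 0 → m ≤ virt N (oset s)) :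
    ∀ s, ((Tcl t).mulVec v) s ≠ 0 → m + 1 ≤ virt N (oset s) := by
  intro s hs
  rw [mulVec_apply'] at hs
  obtain ⟨u, _, hu⟩ := Finset.exists_ne_zero_of_sum_ne_zero hs
  have hTop : Tcl t s u ≠ 0 := fun hc => hu (by rw [hc, zero_mul])
  have hvu : v u ≠ 0 := fun hc => hu (by rw [hc, mul_zero])
  rw [Top_apply] at hTop
  obtain ⟨μ, _, hμ⟩ := Finset.exists_ne_zero_of_sum_ne_zero hTop
  have hX : excIdx μ s u ≠ 0 := fun hc => hμ (by rw [hc, mul_zero])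
  have h2 := (excIdx_entry hX).2
  have h3 := hv u hvu
  have h4 : 1 ≤ rk μ := μ.2.2.2.2.1
  omega

/-- particle-number conservation -/
lemma suppP_T (t : ExIdx K N → ℂ) (v : (Fin K → Fin 2) → ℂ)
    (hv : ∀ s, v s ≠ 0 → (oset s).card = N) :
    ∀ s, ((Tcl t).mulVec v) s ≠ 0 → (oset s).card = N := by
  intro s hs
  rw [mulVec_apply'] at hs
  obtain ⟨u, _, hu⟩ := Finset.exists_ne_zero_of_sum_ne_zero hs
  have hTop : Tcl t s u ≠ 0 := fun hc => hu (by rw [hc, zero_mul])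
  have hvu : v u ≠ 0 := fun hc => hu (by rw [hc, mul_zero])
  rw [Top_apply] at hTop
  obtain ⟨μ, _, hμ⟩ := Finset.exists_ne_zero_of_sum_ne_zero hTop
  have hX : excIdx μ s u ≠ 0 := fun hc => hμ (by rw [hc, mul_zero])
  rw [(excIdx_entry hX).1]
  exact hv u hvu

lemma suppV_pow (t : ExIdx K N → ℂ) (S : Finset (Fin K)) :
    ∀ n, ∀ s, (((Tcl t) ^ n).mulVec (dvec S)) s ≠ 0 →
      virt N S + n ≤ virt N (oset s) := by
  intro n
  induction n with
  | zero =>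
      intro s hs
      rw [pow_zero, Matrix.one_mulVec] at hs
      have : s = cfg S := by
        by_contra hc
        rw [dvec_apply, if_neg hc] at hs
        exact hs rfl
      rw [this, oset_cfg']
      omega
  | succ n ih =>
      intro s hs
      rw [pow_succ', ← Matrix.mulVec_mulVec] at hs
      have := suppV_T t (virt N S + n) (((Tcl t) ^ n).mulVec (dvec S)) ih s hs
      omega

lemma suppV_pow_ref (t : ExIdx K N → ℂ) :
    ∀ n, ∀ s, (((Tcl t) ^ n).mulVec (dvec (S0 K N))) s ≠ 0 →
      n ≤ virt N (oset s) := by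
  intro n s hs
  have := suppV_pow t (S0 K N) n s hs
  omega

lemma suppP_pow_ref (hNK : N ≤ K) (t : ExIdx K N → ℂ) :
    ∀ n, ∀ s, (((Tcl t) ^ n).mulVec (dvec (S0 K N))) s ≠ 0 →
      (oset s).card = N := by
  intro n
  induction n with
  | zero =>
      intro s hs
      rw [pow_zero, Matrix.one_mulVec] at hs
      have : s = cfg (S0 K N) := by
        by_contra hc
        rw [dvec_apply, if_neg hc] at hs
        exact hs rfl
      rw [this, oset_cfg', card_S0 hNK]
  | succ n ih =>
      intro s hs
      rw [pow_succ', ← Matrix.mulVec_mulVec] at hs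
      exact suppP_T t _ ih s hs

/-- nilpotency of the cluster operator -/
lemma T_pow_eq_zero (t : ExIdx K N → ℂ) {n : ℕ} (hn : K + 1 ≤ n) :
    (Tcl t) ^ n = 0 := by
  classical
  have hK1 : (Tcl t) ^ (K + 1) = 0 := by
    ext s u
    have : ((Tcl t) ^ (K + 1)) s u =
        (((Tcl t) ^ (K + 1)).mulVec (dvec (oset u))) s := by
      rw [dvec, cfg_oset, Matrix.mulVec_single]
      simp
    rw [this, Matrix.zero_apply]
    by_contra hc
    have h1 := suppV_pow t (oset u) (K + 1) s hc
    have h2 : virt N (oset s) ≤ (oset s).card := virt_le_card _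
    have h3 : (oset s).card ≤ K := by
      calc (oset s).card ≤ (Finset.univ : Finset (Fin K)).card :=
        Finset.card_le_card (Finset.subset_univ _)
      _ = K := by rw [Finset.card_univ, Fintype.card_fin]
    omega
  have : (Tcl t) ^ n = (Tcl t) ^ (K + 1) * (Tcl t) ^ (n - (K + 1)) := by
    rw [← pow_add]
    congr 1
    omega
  rw [this, hK1, zero_mul]

/-- the exponential is a finite sum -/
lemma exp_T (t : ExIdx K N → ℂ) :
    NormedSpace.exp (Tcl t) =
      ∑ n ∈ Finset.range (K + 1), ((n.factorial : ℂ))⁻¹ • (Tcl t) ^ n := by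
  rw [NormedSpace.exp_eq_tsum (𝕂 := ℂ)]
  exact tsum_eq_sum (fun n hn => by
    have hge : K + 1 ≤ n := le_of_not_gt (fun h => hn (Finset.mem_range.mpr h))
    rw [T_pow_eq_zero t hge, smul_zero])

end CC5

namespace CC6
open CC CC2 CC3 CC4 CC5

variable {K N : ℕ}

/-- the coupled-cluster state -/
noncomputable def Evec (t : ExIdx K N → ℂ) : (Fin K → Fin 2) → ℂ :=
  (NormedSpace.exp (Tcl t)).mulVec (dvec (S0 K N))

lemma Evec_eq_sum (t : ExIdx K N → ℂ) :
    Evec t = ∑ n ∈ Finset.range (K + 1),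
      ((n.factorial : ℂ))⁻¹ • (((Tcl t) ^ n).mulVec (dvec (S0 K N))) := by
  rw [Evec, exp_T, sum_mulVec]
  apply Finset.sum_congr rfl
  intro n _
  rw [Matrix.smul_mulVec]

/-- the key triangularity property: coefficients of the n-fold excitation
at low virtual rank only involve low-rank amplitudes. -/
lemma claimC (t t' : ExIdx K N → ℂ) (k : ℕ) (hag : ∀ ν, rk ν < k → t ν = t' ν) :
    ∀ m, ∀ s : Fin K → Fin 2, virt N (oset s) < k + m →
      (((Tcl t) ^ (m + 1)).mulVec (dvec (S0 K N))) s =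
        (((Tcl t') ^ (m + 1)).mulVec (dvec (S0 K N))) s := by
  intro m
  induction m with
  | zero =>
      intro s hvs
      rw [pow_one, pow_one, Tcl, Tcl, sum_mulVec, sum_mulVec,
        Finset.sum_apply, Finset.sum_apply]
      apply Finset.sum_congr rfl
      intro μ _
      rw [Matrix.smul_mulVec, Matrix.smul_mulVec,
        (excIdx_ref μ).1]
      by_cases hz : dvec (Smu μ) s = 0
      · simp [hz]
      · have hs : s = cfg (Smu μ) := by
          by_contra hc
          rw [dvec_apply, if_neg hc] at hz
          exact hz rfl
        have hrk : rk μ < k := by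
          have : virt N (oset s) = rk μ := by
            rw [hs, oset_cfg', virt_Smu]
          omega
        rw [hag μ hrk]
  | succ m ih =>
      intro s hvs
      have hL : ∀ (tt : ExIdx K N → ℂ),
          ((Tcl tt) ^ (m + 1 + 1)) *ᵥ dvec (S0 K N) =
            Tcl tt *ᵥ (((Tcl tt) ^ (m + 1)) *ᵥ dvec (S0 K N)) := by
        intro tt
        rw [Matrix.mulVec_mulVec, ← pow_succ']
      rw [hL, hL, mulVec_apply', mulVec_apply']
      apply Finset.sum_congr rfl
      intro u _
      rw [Top_apply, Top_apply, Finset.sum_mul, Finset.sum_mul]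
      apply Finset.sum_congr rfl
      intro μ _
      by_cases ha : excIdx μ s u = 0
      · rw [ha]
        ring
      · have hrel := (excIdx_entry ha).2
        have hrkpos : 1 ≤ rk μ := μ.2.2.2.2.1
        have hvu : virt N (oset u) < k + m := by omega
        have hvv := ih u hvu
        by_cases hz : (((Tcl t) ^ (m + 1)).mulVec (dvec (S0 K N))) u = 0
        · rw [hz, ← hvv, hz, mul_zero, mul_zero]
        · have hsup := suppV_pow_ref t (m + 1) u hz
          have hrk : rk μ < k := by omega
          rw [hag μ hrk, hvv]

/-- agreement of CC states whose amplitudes agree up to rank k -/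
lemma Evec_agree (k : ℕ) (t t' : ExIdx K N → ℂ)
    (hag : ∀ ν, rk ν ≤ k → t ν = t' ν)
    (s : Fin K → Fin 2) (hv : virt N (oset s) ≤ k) :
    Evec t s = Evec t' s := by
  rw [Evec_eq_sum, Evec_eq_sum, Finset.sum_apply, Finset.sum_apply]
  apply Finset.sum_congr rfl
  intro n _
  rcases Nat.eq_zero_or_pos n with hn | hn
  · subst hn; rfl
  · obtain ⟨m, rfl⟩ := Nat.exists_eq_add_of_le' hn
    rw [Pi.smul_apply, Pi.smul_apply,
      claimC t t' (k + 1) (fun ν hν => hag ν (by omega)) m s (by omega)]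

/-- the difference of CC states isolates the top-rank amplitude -/
lemma Evec_diff (hNK : N ≤ K) (k : ℕ) (hk : 1 ≤ k) (t t' : ExIdx K N → ℂ)
    (hag : ∀ ν, rk ν < k → t ν = t' ν)
    (S : Finset (Fin K)) (h1 : S.card = N) (hv : virt N S = k)
    (hS0 : S ≠ S0 K N) :
    Evec t (cfg S) - Evec t' (cfg S) =
      (t (toIdx hNK S h1 hS0) - t' (toIdx hNK S h1 hS0)) *
        eps (toIdx hNK S h1 hS0) := by
  classical
  rw [Evec_eq_sum, Evec_eq_sum, Finset.sum_apply, Finset.sum_apply,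
    ← Finset.sum_sub_distrib]
  have hKpos : 1 ∈ Finset.range (K + 1) := by
    rw [Finset.mem_range]
    have : 1 ≤ virt N S := by omega
    have h2 : virt N S ≤ S.card := virt_le_card S
    have h3 : S.card ≤ K := by
      calc S.card ≤ (Finset.univ : Finset (Fin K)).card :=
        Finset.card_le_card (Finset.subset_univ _)
      _ = K := by rw [Finset.card_univ, Fintype.card_fin]
    omega
  rw [Finset.sum_eq_single 1]
  · -- the n = 1 term
    rw [Nat.factorial_one, Nat.cast_one, inv_one, one_smul, one_smul,
      pow_one, pow_one, Tcl, Tcl, sum_mulVec, sum_mulVec,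
      Finset.sum_apply, Finset.sum_apply, ← Finset.sum_sub_distrib]
    rw [Finset.sum_eq_single (toIdx hNK S h1 hS0)]
    · rw [Matrix.smul_mulVec, Matrix.smul_mulVec, (excIdx_ref _).1]
      have hSmu : Smu (toIdx hNK S h1 hS0) = S := Smu_toIdx hNK S h1 hS0
      rw [hSmu]
      rw [Pi.smul_apply, Pi.smul_apply, Pi.smul_apply, Pi.smul_apply,
        dvec_apply, if_pos rfl]
      simp only [smul_eq_mul, mul_one]
      ring
    · intro μ _ hne
      rw [Matrix.smul_mulVec, Matrix.smul_mulVec, (excIdx_ref _).1]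
      by_cases hz : dvec (Smu μ) (cfg S) = 0
      · rw [Pi.smul_apply, Pi.smul_apply, Pi.smul_apply, Pi.smul_apply, hz]
        simp
      · exfalso
        have hs : cfg S = cfg (Smu μ) := by
          by_contra hc
          rw [dvec_apply, if_neg hc] at hz
          exact hz rfl
        have hSeq : S = Smu μ := cfg_injective hs
        apply hne
        subst hSeq
        exact (toIdx_Smu hNK μ h1 hS0).symm
    · intro hc
      exact absurd (Finset.mem_univ _) hc
  · -- other terms vanish
    intro n _ hn1
    rcases Nat.eq_zero_or_pos n with hn | hn
    · subst hn
      simp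
    · obtain ⟨m, rfl⟩ := Nat.exists_eq_add_of_le' hn
      have hm : 1 ≤ m := by omega
      rw [Pi.smul_apply, Pi.smul_apply,
        claimC t t' k hag m (cfg S) (by rw [oset_cfg']; omega)]
      simp
  · intro hc
    exact absurd hKpos hc

lemma Evec_S0 (t : ExIdx K N → ℂ) : Evec t (cfg (S0 K N)) = 1 := by
  rw [Evec_eq_sum, Finset.sum_apply]
  rw [Finset.sum_eq_single 0]
  · rw [pow_zero, Matrix.one_mulVec, Pi.smul_apply, dvec_apply, if_pos rfl]
    simp
  · intro n _ hn0
    have hn : 1 ≤ n := Nat.one_le_iff_ne_zero.2 hn0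
    obtain ⟨m, rfl⟩ := Nat.exists_eq_add_of_le' hn
    rw [Pi.smul_apply]
    by_cases hz : (((Tcl t) ^ (m + 1)).mulVec (dvec (S0 K N))) (cfg (S0 K N)) = 0
    · rw [hz, smul_zero]
    · exfalso
      have := suppV_pow_ref t (m + 1) _ hz
      rw [oset_cfg', virt_S0] at this
      omega
  · intro hc
    exact absurd (Finset.mem_range.2 (by omega)) hc

lemma rk_toIdx (hNK : N ≤ K) (S : Finset (Fin K)) (h1 : S.card = N)
    (h2 : S ≠ S0 K N) : rk (toIdx hNK S h1 h2) = virt N S := by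
  rw [← virt_Smu, Smu_toIdx]

end CC6

namespace CC7
open CC CC2 CC3 CC4 CC5 CC6

variable {K N : ℕ}

lemma uniq (hNK : N ≤ K) (t t' : ExIdx K N → ℂ) (h : Evec t = Evec t') :
    t = t' := by
  funext μ
  suffices H : ∀ k, ∀ μ : ExIdx K N, rk μ = k → t μ = t' μ by
    exact H (rk μ) μ rfl
  intro k
  induction k using Nat.strong_induction_on with
  | _ k ih =>
    intro μ hμ
    have hk : 1 ≤ k := hμ ▸ μ.2.2.2.2.1
    have h1 : (Smu μ).card = N := card_Smu hNK μ
    have h2 : Smu μ ≠ S0 K N := Smu_ne_S0 μ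
    have hd := Evec_diff hNK k hk t t'
      (fun ν hν => ih (rk ν) (by omega) ν rfl)
      (Smu μ) h1 (by rw [virt_Smu, hμ]) h2
    rw [h, sub_self, toIdx_Smu hNK μ h1 h2] at hd
    have heps := eps_ne_zero μ
    rcases mul_eq_zero.1 hd.symm with h' | h'
    · exact sub_eq_zero.1 h'
    · exact absurd h' heps

lemma exists_upto (hNK : N ≤ K) (w : (Fin K → Fin 2) → ℂ)
    (hw0 : w (cfg (S0 K N)) = 1) :
    ∀ k : ℕ, ∃ t : ExIdx K N → ℂ, (∀ ν, k < rk ν → t ν = 0) ∧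
      ∀ S : Finset (Fin K), S.card = N → virt N S ≤ k →
        Evec t (cfg S) = w (cfg S) := by
  intro k
  induction k with
  | zero =>
      refine ⟨0, fun ν _ => rfl, ?_⟩
      intro S h1 h2
      have hfil : S.filter (fun i : Fin K => N ≤ (i : ℕ)) = ∅ := by
        rw [← Finset.card_eq_zero]
        exact Nat.le_zero.1 h2
      have hsub : S ⊆ S0 K N := by
        intro i hi
        rw [mem_S0]
        by_contra hc
        have : i ∈ S.filter (fun i : Fin K => N ≤ (i : ℕ)) :=
          Finset.mem_filter.2 ⟨hi, by omega⟩
        rw [hfil] at this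
        exact absurd this (Finset.notMem_empty i)
      have hSS0 : S = S0 K N :=
        Finset.eq_of_subset_of_card_le hsub (by rw [card_S0 hNK, h1])
      rw [hSS0, Evec_S0, hw0]
  | succ k ihk =>
      classical
      obtain ⟨t, ht0, htS⟩ := ihk
      refine ⟨fun ν => if rk ν = k + 1 then
          (eps ν)⁻¹ * (w (cfg (Smu ν)) - Evec t (cfg (Smu ν)))
        else t ν, ?_, ?_⟩
      · intro ν hν
        show (if rk ν = k + 1 then
            (eps ν)⁻¹ * (w (cfg (Smu ν)) - Evec t (cfg (Smu ν)))
          else t ν) = 0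
        rw [if_neg (show ¬ rk ν = k + 1 by omega)]
        exact ht0 ν (by omega)
      · intro S h1 h2
        set t' : ExIdx K N → ℂ := fun ν => if rk ν = k + 1 then
            (eps ν)⁻¹ * (w (cfg (Smu ν)) - Evec t (cfg (Smu ν)))
          else t ν with ht'
        have hagree : ∀ ν, rk ν ≤ k → t' ν = t ν := by
          intro ν hν
          rw [ht']
          exact if_neg (by omega)
        by_cases hle : virt N S ≤ k
        · rw [Evec_agree k t' t hagree (cfg S) (by rw [oset_cfg']; exact hle)]
          exact htS S h1 hle
        · have heq : virt N S = k + 1 := by omega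
          have hS0 : S ≠ S0 K N := by
            intro hc
            rw [hc, virt_S0] at heq
            omega
          have hd := Evec_diff hNK (k + 1) (by omega) t' t
            (fun ν hν => hagree ν (by omega)) S h1 heq hS0
          have hrkμ : rk (toIdx hNK S h1 hS0) = k + 1 := by
            rw [rk_toIdx]
            exact heq
          have htμ : t (toIdx hNK S h1 hS0) = 0 := ht0 _ (by omega)
          have hSmu : Smu (toIdx hNK S h1 hS0) = S := Smu_toIdx hNK S h1 hS0
          have ht'μ : t' (toIdx hNK S h1 hS0) =
              (eps (toIdx hNK S h1 hS0))⁻¹ * (w (cfg S) - Evec t (cfg S)) := by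
            rw [ht']
            simp only [if_pos hrkμ, hSmu]
          have heps := eps_ne_zero (toIdx hNK S h1 hS0)
          have hE : Evec t' (cfg S) =
              Evec t (cfg S) + (t' (toIdx hNK S h1 hS0) -
                t (toIdx hNK S h1 hS0)) * eps (toIdx hNK S h1 hS0) := by
            linear_combination hd
          rw [hE, ht'μ, htμ, sub_zero]
          field_simp
          ring

end CC7


theorem stmt_19 (K N : ℕ) (hNK : N ≤ K) (w : (Fin K → Fin 2) → ℂ)
    -- intermediate normalization ⟨φ₀|w⟩ = 1
    (hnorm : star (refState K N) ⬝ᵥ w = 1)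
    -- w lies in the N-particle sector
    (hsector : ∀ s : Fin K → Fin 2, w s ≠ 0 →
      (Finset.univ.filter fun i : Fin K => s i = 1).card = N) :
    ∃! t : ExIdx K N → ℂ,
      w = (NormedSpace.exp (∑ μ : ExIdx K N, t μ • excIdx μ)).mulVec
            (refState K N) := by
  classical
  open CC CC2 CC3 CC4 CC5 CC6 CC7 in
  have href : refState K N = dvec (S0 K N) := by
    funext s
    have hc : cfg (S0 K N) =
        (fun i : Fin K => if (i : ℕ) < N then (1 : Fin 2) else 0) := by
      funext i
      simp [cfg, mem_S0]
    rw [refState, dvec_apply, hc]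
    by_cases h : (fun i : Fin K => if (i : ℕ) < N then (1 : Fin 2) else 0) = s
    · rw [if_pos h, if_pos h.symm]
    · rw [if_neg h, if_neg (fun h' => h h'.symm)]
  have hmain : ∀ u : ExIdx K N → ℂ,
      (NormedSpace.exp (∑ μ : ExIdx K N, u μ • excIdx μ)).mulVec
        (refState K N) = CC6.Evec u := by
    intro u
    rw [href]
    rfl
  have hw0 : w (CC2.cfg (CC4.S0 K N)) = 1 := by
    rw [href] at hnorm
    rw [← hnorm, dotProduct]
    rw [Finset.sum_eq_single (CC2.cfg (CC4.S0 K N))]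
    · rw [Pi.star_apply, CC2.dvec_apply, if_pos rfl]
      simp
    · intro b _ hb
      rw [Pi.star_apply, CC2.dvec_apply, if_neg hb]
      simp
    · intro hc
      exact absurd (Finset.mem_univ _) hc
  obtain ⟨t, ht0, htS⟩ := CC7.exists_upto hNK w hw0 N
  refine ⟨t, ?_, ?_⟩
  · show w = (NormedSpace.exp (∑ μ : ExIdx K N, t μ • excIdx μ)).mulVec
      (refState K N)
    rw [hmain]
    funext s
    by_cases hp : (CC5.oset s).card = N
    · have hs : s = CC2.cfg (CC5.oset s) := (CC5.cfg_oset s).symm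
      rw [hs]
      exact (htS (CC5.oset s) hp
        (le_trans (CC4.virt_le_card _) (le_of_eq hp))).symm
    · have hws : w s = 0 := by
        by_contra hc
        exact hp (hsector s hc)
      rw [hws, CC6.Evec_eq_sum, Finset.sum_apply]
      symm
      apply Finset.sum_eq_zero
      intro n _
      rw [Pi.smul_apply]
      by_cases hz : (((CC5.Tcl t) ^ n).mulVec (CC2.dvec (CC4.S0 K N))) s = 0
      · rw [hz, smul_zero]
      · exact absurd (CC5.suppP_pow_ref hNK t n s hz) hp
  · intro y hy
    apply CC7.uniq hNK y t
    rw [hmain] at hy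
    have h2 : w = CC6.Evec t := by
      funext s
      by_cases hp : (CC5.oset s).card = N
      · have hs : s = CC2.cfg (CC5.oset s) := (CC5.cfg_oset s).symm
        rw [hs]
        exact (htS (CC5.oset s) hp
          (le_trans (CC4.virt_le_card _) (le_of_eq hp))).symm
      · have hws : w s = 0 := by
          by_contra hc
          exact hp (hsector s hc)
        rw [hws, CC6.Evec_eq_sum, Finset.sum_apply]
        symm
        apply Finset.sum_eq_zero
        intro n _
        rw [Pi.smul_apply]
        by_cases hz : (((CC5.Tcl t) ^ n).mulVec (CC2.dvec (CC4.S0 K N))) s = 0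
        · rw [hz, smul_zero]
        · exact absurd (CC5.suppP_pow_ref hNK t n s hz) hp
    rw [← hy, ← h2]
end
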